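/- Let G be a finite group, P a G-poset with an initial object x₀, and ρ : P⋊G → C a category extension; give C the atomic topology. Then for every presheaf of sets 𝔊 on C, the sheafification of 𝔊 is naturally isomorphic to the fixed-point presheaf F_{𝔊(x₀)}, where 𝔊(x₀) carries the right G-set structure described below; in particular F_{𝔊(x₀)}(x) ≅ 𝔊(x₀)^{K(x)} for every object x. -/

import Mathlib

open CategoryTheory

/-! ## Basic site-theoretic notions -/

/-- The Ore condition: any cospan can be completed to a commutative square. -/
def OreCondition (C : Type*) [Category C] : Prop :=
  ∀ ⦃x y z : C⦄ (f : y ⟶ x) (g : z ⟶ x),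
    ∃ (w : C) (p : w ⟶ y) (q : w ⟶ z), p ≫ f = q ≫ g

/-- A Grothendieck topology is the atomic topology iff its covering sieves are
exactly the nonempty sieves. -/
def IsAtomicTopology {C : Type*} [Category C] (J : GrothendieckTopology C) : Prop :=
  ∀ (x : C) (S : Sieve x), S ∈ J x ↔ ∃ (y : C) (f : y ⟶ x), S f

/-- The presieve on `c` consisting of all morphisms with domain `c₀`. -/
def domPresieve {C : Type*} [Category C] (c₀ : C) (c : C) : Presieve c :=
  fun Y => {_f | Y = c₀}

/-! ## Right `G`-sets and the orbit category -/

/-- The category of right `G`-sets, realized as presheaves of sets on the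
one-object category of `G`. -/
abbrev GSet (G : Type) [Group G] := (SingleObj G)ᵒᵖ ⥤ Type

variable {G : Type} [Group G]

/-- The right coset space `H\G` as a right `G`-set (`G` acting by right
multiplication). -/
def cosetGSet (H : Subgroup G) : GSet G where
  obj _ := Quotient (QuotientGroup.rightRel H)
  map f := TypeCat.ofHom (Quotient.map' (fun x => x * f.unop)
    (fun a b hab => by
      rw [QuotientGroup.rightRel_apply] at hab ⊢
      simpa [mul_assoc] using hab))
  map_id _ := by
    ext q
    induction q using Quotient.inductionOn' with
    | h a => exact congrArg (Quotient.mk _) (mul_one a)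
  map_comp f g := by
    ext q
    induction q using Quotient.inductionOn' with
    | h a => exact congrArg (Quotient.mk _) (mul_assoc a f.unop g.unop).symm

/-- The orbit category `O(G)`: the full subcategory of right `G`-sets on the
coset spaces `H\G`, indexed by the subgroups of `G`. -/
abbrev OrbitCat (G : Type) [Group G] := InducedCategory (GSet G) (cosetGSet (G := G))

/-- For `a ∈ G`, the `G`-map `c_a : 1\G → 1\G`, `k ↦ a * k`. -/
def botAuto (a : G) : cosetGSet (⊥ : Subgroup G) ⟶ cosetGSet (⊥ : Subgroup G) where
  app _ := TypeCat.ofHom (Quotient.map' (fun k => a * k)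
    (fun x y hxy => by
      rw [QuotientGroup.rightRel_apply] at hxy ⊢
      simp only [Subgroup.mem_bot] at hxy ⊢
      rw [mul_inv_rev, ← mul_assoc, mul_assoc a, hxy]
      simp))
  naturality X Y f := by
    ext q
    induction q using Quotient.inductionOn' with
    | h k => exact congrArg (Quotient.mk _) (mul_assoc a k f.unop).symm

/-- The functor from the one-object category of `G` to the orbit category with
value `1\G`, sending `a` to `c_a`; it makes `F(1\G)` a right `G`-set for any
presheaf `F` on the orbit category. -/
def orbitBotIota (G : Type) [Group G] : SingleObj G ⥤ OrbitCat G where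
  obj _ := (⊥ : Subgroup G)
  map a := InducedCategory.homMk (botAuto a)
  map_id _ := by
    apply InducedCategory.hom_ext
    apply NatTrans.ext
    funext X
    ext q
    induction q using Quotient.inductionOn' with
    | h k => exact congrArg (Quotient.mk _) (one_mul k)
  map_comp {x y z} a b := by
    apply InducedCategory.hom_ext
    apply NatTrans.ext
    funext X
    ext q
    induction q using Quotient.inductionOn' with
    | h k => exact congrArg (Quotient.mk _) (mul_assoc b a k)

/-! ## The transporter category of a `G`-poset -/

/-- The transporter category `P ⋊ G` of a `G`-poset `P`: objects are those of
`P`, and morphisms `x ⟶ y` are elements `g ∈ G` with `g • x ≤ y`. -/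
@[ext] structure Transporter (G : Type) (P : Type) where pt : P

instance Transporter.category (G P : Type) [Group G] [PartialOrder P] [MulAction G P]
    [CovariantClass G P (· • ·) (· ≤ ·)] : Category (Transporter G P) where
  Hom x y := { g : G // g • x.pt ≤ y.pt }
  id x := ⟨1, by simp⟩
  comp {x y z} f g := ⟨g.1 * f.1, by
    rw [mul_smul]
    exact le_trans (CovariantClass.elim g.1 f.2) g.2⟩
  id_comp f := Subtype.ext (mul_one _)
  comp_id f := Subtype.ext (one_mul _)
  assoc f g h := Subtype.ext (mul_assoc h.1 g.1 f.1).symm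

variable {P : Type} [PartialOrder P] [MulAction G P]
    [CovariantClass G P (· • ·) (· ≤ ·)]

theorem smul_le_smul_act (g : G) {a b : P} (h : a ≤ b) : g • a ≤ g • b :=
  CovariantClass.elim g h

/-- An initial (i.e. bottom) element of a `G`-poset is fixed by `G`. -/
theorem smul_bot_eq {x₀ : P} (hbot : ∀ x : P, x₀ ≤ x) (g : G) : g • x₀ = x₀ :=
  le_antisymm (by simpa using smul_le_smul_act g (hbot (g⁻¹ • x₀))) (hbot _)

/-- The endomorphism `(g, id)` of the initial object `x₀` of `P ⋊ G`. -/
def gmor {x₀ : P} (hbot : ∀ x : P, x₀ ≤ x) (g : G) :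
    (⟨x₀⟩ : Transporter G P) ⟶ (⟨x₀⟩ : Transporter G P) :=
  ⟨g, le_of_eq (smul_bot_eq hbot g)⟩

theorem gmor_comp {x₀ : P} (hbot : ∀ x : P, x₀ ≤ x) (a b : G) :
    gmor (G := G) hbot b ≫ gmor hbot a = gmor hbot (a * b) := rfl

theorem gmor_one {x₀ : P} (hbot : ∀ x : P, x₀ ≤ x) :
    gmor (G := G) hbot (1 : G) = 𝟙 (⟨x₀⟩ : Transporter G P) := rfl

/-- The projection functor `π : P ⋊ G ⥤ G`. -/
def piFunctor (G P : Type) [Group G] [PartialOrder P] [MulAction G P]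
    [CovariantClass G P (· • ·) (· ≤ ·)] : Transporter G P ⥤ SingleObj G where
  obj _ := SingleObj.star G
  map f := f.1
  map_id _ := rfl
  map_comp _ _ := rfl

/-! ## Quotients of transporter categories and fixed-point presheaves -/

variable {C : Type} [SmallCategory C]

section
variable (ρ : Transporter G P ⥤ C) {x₀ : P} (hbot : ∀ x : P, x₀ ≤ x)

/-- `Hom_C(x₀, c)` as a right `G`-set, with `f · g := ρ(g, id) ≫ f`. -/
def homGSet (c : C) : GSet G where
  obj _ := (ρ.obj ⟨x₀⟩ ⟶ c)
  map f := TypeCat.ofHom (fun φ => ρ.map (gmor hbot f.unop) ≫ φ)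
  map_id _ := by
    ext φ
    show ρ.map (gmor hbot (1 : G)) ≫ φ = φ
    rw [gmor_one, ρ.map_id, Category.id_comp]
  map_comp {X Y Z} f g := by
    ext φ
    show ρ.map (gmor hbot (f.unop * g.unop)) ≫ φ =
      ρ.map (gmor hbot g.unop) ≫ ρ.map (gmor hbot f.unop) ≫ φ
    rw [← gmor_comp, ρ.map_comp, Category.assoc]

/-- Postcomposition `Hom_C(x₀, c) → Hom_C(x₀, c')` with `φ : c ⟶ c'`, as a map
of right `G`-sets. -/
def homGSetMap {c c' : C} (φ : c ⟶ c') : homGSet ρ hbot c ⟶ homGSet ρ hbot c' where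
  app _ := TypeCat.ofHom (fun f => (show ρ.obj ⟨x₀⟩ ⟶ c from f) ≫ φ)
  naturality X Y f := by
    ext ψ
    show (ρ.map (gmor hbot f.unop) ≫ (show ρ.obj ⟨x₀⟩ ⟶ c from ψ)) ≫ φ =
      ρ.map (gmor hbot f.unop) ≫ ((show ρ.obj ⟨x₀⟩ ⟶ c from ψ) ≫ φ)
    exact Category.assoc _ _ _

theorem homGSetMap_id (c : C) : homGSetMap ρ hbot (𝟙 c) = 𝟙 (homGSet ρ hbot c) := by
  apply NatTrans.ext
  funext X
  ext f
  exact Category.comp_id f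

theorem homGSetMap_comp {c c' c'' : C} (φ : c ⟶ c') (ψ : c' ⟶ c'') :
    homGSetMap ρ hbot (φ ≫ ψ) = homGSetMap ρ hbot φ ≫ homGSetMap ρ hbot ψ := by
  apply NatTrans.ext
  funext X
  ext f
  exact (Category.assoc _ _ _).symm

/-- The fixed-point presheaf `F_M : x ↦ Hom_{G-Set}(Hom_C(x₀, x), M)` on `C`. -/
def fixedPointPresheaf (M : GSet G) : Cᵒᵖ ⥤ Type where
  obj c := homGSet ρ hbot c.unop ⟶ M
  map {c c'} ψ := TypeCat.ofHom (fun η => homGSetMap ρ hbot ψ.unop ≫ η)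
  map_id c := by
    refine TypeCat.homEquiv.injective (funext fun η => ?_)
    show homGSetMap ρ hbot (𝟙 c.unop) ≫ η = η
    rw [homGSetMap_id, Category.id_comp]
  map_comp {c c' c''} ψ ψ' := by
    refine TypeCat.homEquiv.injective (funext fun η => ?_)
    show homGSetMap ρ hbot (ψ'.unop ≫ ψ.unop) ≫ η = _
    rw [homGSetMap_comp, Category.assoc]
    rfl

/-- The right `G`-set `𝔊(x₀)` attached to a presheaf `𝔊` on `C`: `g ∈ G`
acts as `𝔊(ρ(g, id))`. -/
def evalGSet (𝔊 : Cᵒᵖ ⥤ Type) : GSet G where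
  obj _ := 𝔊.obj (Opposite.op (ρ.obj ⟨x₀⟩))
  map f := 𝔊.map (ρ.map (gmor hbot f.unop)).op
  map_id _ := by
    show 𝔊.map (ρ.map (gmor hbot (1 : G))).op = _
    rw [gmor_one, ρ.map_id]
    exact 𝔊.map_id _
  map_comp {X Y Z} f g := by
    show 𝔊.map (ρ.map (gmor hbot (f.unop * g.unop))).op = _
    rw [← gmor_comp, ρ.map_comp, op_comp, 𝔊.map_comp]

end

/-- `ρ : P⋊G ⥤ C` is a category extension: it is bijective on objects,
surjective on morphism sets, the kernel groups `K(y)` act freely by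
postcomposition on hom sets, and `ρ` exactly identifies the `K(y)`-orbits of
morphisms, i.e. `K(y)\Hom(x, y) ≅ Hom_C(ρx, ρy)`. -/
structure IsCatExtension (ρ : Transporter G P ⥤ C) : Prop where
  bij_obj : Function.Bijective ρ.obj
  surj_map : ∀ {x y : Transporter G P} (f : ρ.obj x ⟶ ρ.obj y), ∃ u : x ⟶ y, ρ.map u = f
  free : ∀ {y : Transporter G P} (α : y ⟶ y), ρ.map α = 𝟙 (ρ.obj y) →
    ∀ {x : Transporter G P} (u : x ⟶ y), u ≫ α = u → α = 𝟙 y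
  fiber : ∀ {x y : Transporter G P} (u u' : x ⟶ y),
    ρ.map u = ρ.map u' ↔ ∃ α : y ⟶ y, ρ.map α = 𝟙 (ρ.obj y) ∧ u ≫ α = u'

/-! ## The transporter category `T(G)` on subgroups -/

/-- The transporter category `T(G)`: objects are the subgroups of `G`,
morphisms `H ⟶ K` are elements `g ∈ G` with `gHg⁻¹ ≤ K`. -/
@[ext] structure TransporterCat (G : Type) [Group G] where sub : Subgroup G

instance TransporterCat.category (G : Type) [Group G] : Category (TransporterCat G) where
  Hom H K := { g : G // ∀ h ∈ H.sub, g * h * g⁻¹ ∈ K.sub }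
  id H := ⟨1, fun h hh => by simpa using hh⟩
  comp {H K L} f g := ⟨g.1 * f.1, fun h hh => by
    have hmem := g.2 _ (f.2 h hh)
    have heq : g.1 * (f.1 * h * f.1⁻¹) * g.1⁻¹ = (g.1 * f.1) * h * (g.1 * f.1)⁻¹ := by group
    rwa [heq] at hmem⟩
  id_comp f := Subtype.ext (mul_one _)
  comp_id f := Subtype.ext (one_mul _)
  assoc f g h := Subtype.ext (mul_assoc h.1 g.1 f.1).symm

/-- The conjugate subgroup `gHg⁻¹`. -/
def conjSubgroup (g : G) (H : Subgroup G) : Subgroup G :=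
  H.map (MulAut.conj g).toMonoidHom

lemma conjSubgroup_inv_mem {g : G} {H : Subgroup G} {w : G}
    (hw : w ∈ conjSubgroup g H) : g⁻¹ * w * g⁻¹⁻¹ ∈ H := by
  obtain ⟨h, hh, rfl⟩ := hw
  have : g⁻¹ * ((MulAut.conj g).toMonoidHom h) * g⁻¹⁻¹ = h := by
    simp [MulAut.conj_apply]; group
  rwa [this]

/-- The `G`-map `H\G → K\G`, `Hk ↦ Kgk`, attached to `g ∈ G` with `gHg⁻¹ ≤ K`. -/
def transToOrbit {H K : Subgroup G} (g : { g : G // ∀ h ∈ H, g * h * g⁻¹ ∈ K }) :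
    cosetGSet H ⟶ cosetGSet K where
  app _ := TypeCat.ofHom (Quotient.map' (fun k => g.1 * k)
    (fun a b hab => by
      rw [QuotientGroup.rightRel_apply] at hab ⊢
      have := g.2 _ hab
      have heq : g.1 * (b * a⁻¹) * g.1⁻¹ = (g.1 * b) * (g.1 * a)⁻¹ := by group
      rwa [heq] at this))
  naturality X Y f := by
    ext q
    induction q using Quotient.inductionOn' with
    | h k => exact congrArg (Quotient.mk _) (mul_assoc g.1 k f.unop).symm

/-- The setoid on `{g : G // gHg⁻¹ ≤ K}` whose classes are right cosets `Kg`. -/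
def transSetoid (H K : Subgroup G) : Setoid { g : G // ∀ h ∈ H, g * h * g⁻¹ ∈ K } where
  r a b := a.1 * b.1⁻¹ ∈ K
  iseqv := by
    constructor
    · intro a; simpa using K.one_mem
    · intro a b h
      simpa using K.inv_mem h
    · intro a b c h1 h2
      have := K.mul_mem h1 h2
      simpa [mul_assoc] using this

/-! ## The coset space `H\G` as a discrete `G`-poset -/

/-- The coset space `H\G` as a discretely ordered `G`-poset, with `g` acting
by `Hk ↦ Hkg⁻¹`. -/
def CosetPoset (G : Type) [Group G] (H : Subgroup G) :=
  Quotient (QuotientGroup.rightRel H)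

instance (H : Subgroup G) : PartialOrder (CosetPoset G H) where
  le x y := x = y
  le_refl _ := rfl
  le_trans _ _ _ h h' := Eq.trans h h'
  le_antisymm _ _ h _ := h

instance (H : Subgroup G) : MulAction G (CosetPoset G H) where
  smul g := Quotient.map' (fun k => k * g⁻¹)
    (fun a b hab => by
      rw [QuotientGroup.rightRel_apply] at hab ⊢
      simpa [mul_assoc] using hab)
  one_smul q := by
    induction q using Quotient.inductionOn' with
    | h k => exact congrArg (Quotient.mk _) (by simp)
  mul_smul a b q := by
    induction q using Quotient.inductionOn' with
    | h k => exact congrArg (Quotient.mk _) (by simp [mul_assoc])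

instance (H : Subgroup G) : CovariantClass G (CosetPoset G H) (· • ·) (· ≤ ·) where
  elim g x y h := le_of_eq (congrArg (g • ·) (le_antisymm h (Eq.symm h : y ≤ x)))

/-! ## Underlying `G`-set of a right `RG`-module -/

/-- The underlying right `G`-set of a right `RG`-module. -/
noncomputable def UGSet (R : Type) [CommRing R]
    (M : ModuleCat (MonoidAlgebra R G)ᵐᵒᵖ) : GSet G where
  obj _ := M
  map f := TypeCat.ofHom (fun m => (MulOpposite.op (MonoidAlgebra.single f.unop (1 : R))) • m)
  map_id _ := by
    ext m
    show (MulOpposite.op (MonoidAlgebra.single (1 : G) (1 : R))) • m = m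
    rw [← MonoidAlgebra.one_def, MulOpposite.op_one, one_smul]
  map_comp {X Y Z} f g := by
    ext m
    show (MulOpposite.op (MonoidAlgebra.single (f.unop * g.unop) (1 : R))) • m =
      (MulOpposite.op (MonoidAlgebra.single g.unop (1 : R))) •
        ((MulOpposite.op (MonoidAlgebra.single f.unop (1 : R))) • m)
    rw [smul_smul, ← MulOpposite.op_mul, MonoidAlgebra.single_mul_single, one_mul]



section AuxProofs
open CategoryTheory Opposite

namespace SheafFixAux

variable {G : Type} [Group G] {P : Type} [PartialOrder P] [MulAction G P]
  [CovariantClass G P (· • ·) (· ≤ ·)] {C : Type} [SmallCategory C]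
  (ρ : Transporter G P ⥤ C) {x₀ : P} (hbot : ∀ x : P, x₀ ≤ x)

include hbot

/-- The canonical object of `(SingleObj G)ᵒᵖ`. -/
abbrev pt (G : Type) [Group G] : (SingleObj G)ᵒᵖ := op (SingleObj.star G)

/-- `g : G` as an endomorphism of `pt G`. -/
def gop (g : G) : pt G ⟶ pt G :=
  Quiver.Hom.op (show SingleObj.star G ⟶ SingleObj.star G from g)

lemma endo_eq (hρ : IsCatExtension ρ) (e : ρ.obj ⟨x₀⟩ ⟶ ρ.obj ⟨x₀⟩) :
    ∃ g : G, e = ρ.map (gmor hbot g) := by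
  obtain ⟨u, hu⟩ := hρ.surj_map e
  have : gmor (G := G) hbot u.1 = u := Subtype.ext rfl
  exact ⟨u.1, by rw [this, hu]⟩

lemma exists_hom (hρ : IsCatExtension ρ) (c : C) :
    Nonempty (ρ.obj ⟨x₀⟩ ⟶ c) := by
  obtain ⟨t, rfl⟩ := hρ.bij_obj.2 c
  exact ⟨ρ.map ⟨1, by simpa using hbot _⟩⟩

lemma factor (hρ : IsCatExtension ρ) {c d : C} (f : d ⟶ c) (b : ρ.obj ⟨x₀⟩ ⟶ c) :
    ∃ a : ρ.obj ⟨x₀⟩ ⟶ d, a ≫ f = b := by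
  obtain ⟨tc, rfl⟩ := hρ.bij_obj.2 c
  obtain ⟨td, rfl⟩ := hρ.bij_obj.2 d
  obtain ⟨uf, rfl⟩ := hρ.surj_map f
  obtain ⟨ub, rfl⟩ := hρ.surj_map b
  refine ⟨ρ.map ⟨uf.1⁻¹ * ub.1, ?_⟩, ?_⟩
  · rw [smul_bot_eq hbot]; exact hbot _
  · rw [← ρ.map_comp]
    congr 1
    refine Subtype.ext ?_
    show uf.1 * (uf.1⁻¹ * ub.1) = ub.1
    group

variable {M : GSet G}

/-- Equivariance of an element of the fixed-point presheaf. -/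
lemma sigma_equivariant {c : C} (σ : homGSet ρ hbot c ⟶ M) (g : G)
    (b : ρ.obj ⟨x₀⟩ ⟶ c) :
    σ.app (pt G) (ρ.map (gmor hbot g) ≫ b) = M.map (gop g) (σ.app (pt G) b) :=
  ConcreteCategory.congr_hom (σ.naturality (gop g)) b

/-- Evaluation form of compatibility of a family of elements of the
fixed-point presheaf. -/
lemma compat_eval {X : C} {S : Sieve X}
    {x : Presieve.FamilyOfElements (fixedPointPresheaf ρ hbot M) S.arrows}
    (hx : x.Compatible) {d₁ d₂ : C} {f₁ : d₁ ⟶ X} {f₂ : d₂ ⟶ X}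
    (h₁ : S f₁) (h₂ : S f₂) (a₁ : ρ.obj ⟨x₀⟩ ⟶ d₁) (a₂ : ρ.obj ⟨x₀⟩ ⟶ d₂)
    (w : a₁ ≫ f₁ = a₂ ≫ f₂) :
    (x f₁ h₁).app (pt G) a₁ = (x f₂ h₂).app (pt G) a₂ := by
  have := hx a₁ a₂ h₁ h₂ w
  have e : (x f₁ h₁).app (pt G) (𝟙 _ ≫ a₁) = (x f₂ h₂).app (pt G) (𝟙 _ ≫ a₂) :=
    ConcreteCategory.congr_hom (congr_fun (congr_arg NatTrans.app this) (pt G)) (𝟙 (ρ.obj ⟨x₀⟩))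
  simpa only [Category.id_comp] using e

lemma fpp_isSheaf (hρ : IsCatExtension ρ) {J : GrothendieckTopology C}
    (hJ : IsAtomicTopology J) (M : GSet G) :
    Presheaf.IsSheaf J (fixedPointPresheaf ρ hbot M) := by
  rw [isSheaf_iff_isSheaf_of_type]
  intro X S hS x hx
  obtain ⟨y, f, hf⟩ := (hJ X S).1 hS
  have fac : ∀ b : ρ.obj ⟨x₀⟩ ⟶ X, ∃ a : ρ.obj ⟨x₀⟩ ⟶ y, a ≫ f = b :=
    fun b => factor ρ hbot hρ f b
  refine ⟨{ app := fun _ => TypeCat.ofHom (fun b => (x f hf).app (pt G) (fac b).choose)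
            naturality := ?_ }, ?_, ?_⟩
  · intro Z W g
    ext b
    show (x f hf).app (pt G) (fac (ρ.map (gmor hbot g.unop) ≫ b)).choose =
      M.map g ((x f hf).app (pt G) (fac b).choose)
    rw [compat_eval ρ hbot hx hf hf _ (ρ.map (gmor hbot g.unop) ≫ (fac b).choose)
      (by rw [Category.assoc, (fac b).choose_spec, (fac _).choose_spec])]
    exact sigma_equivariant ρ hbot (x f hf) g.unop (fac b).choose
  · intro d' f' h'
    refine NatTrans.ext (funext fun Z => ConcreteCategory.hom_ext _ _ fun b => ?_)
    show (x f hf).app (pt G) (fac (b ≫ f')).choose = (x f' h').app Z b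
    exact compat_eval ρ hbot hx hf h' _ b ((fac (b ≫ f')).choose_spec)
  · intro t' ht'
    refine NatTrans.ext (funext fun Z => ConcreteCategory.hom_ext _ _ fun b => ?_)
    have e := ConcreteCategory.congr_hom (congr_fun (congr_arg NatTrans.app (ht' f hf)) (pt G))
      (fac b).choose
    show t'.app Z b = (x f hf).app (pt G) (fac b).choose
    rw [← e]
    show t'.app (pt G) b = t'.app (pt G) ((fac b).choose ≫ f)
    rw [(fac b).choose_spec]

/-- The unit morphism `𝔊 ⟶ F_{𝔊(x₀)}`. -/
def unitMap (𝔊 : Cᵒᵖ ⥤ Type) :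
    𝔊 ⟶ fixedPointPresheaf ρ hbot (evalGSet ρ hbot 𝔊) where
  app c := TypeCat.ofHom fun s =>
    { app := fun _ => TypeCat.ofHom (fun b => 𝔊.map (Quiver.Hom.op b) s)
      naturality := by
        intro Z W g
        ext b
        change ρ.obj ⟨x₀⟩ ⟶ unop c at b
        show 𝔊.map (ρ.map (gmor hbot g.unop) ≫ b).op s =
          𝔊.map (ρ.map (gmor hbot g.unop)).op (𝔊.map b.op s)
        rw [op_comp, FunctorToTypes.map_comp_apply] }
  naturality c c' ψ := by
    ext s
    refine NatTrans.ext (funext fun Z => ConcreteCategory.hom_ext _ _ fun b => ?_)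
    change ρ.obj ⟨x₀⟩ ⟶ unop c' at b
    show 𝔊.map b.op (𝔊.map ψ s) = 𝔊.map (b ≫ ψ.unop).op s
    rw [op_comp, FunctorToTypes.map_comp_apply]
    rfl

lemma unit_locInj (hρ : IsCatExtension ρ) {J : GrothendieckTopology C}
    (hJ : IsAtomicTopology J) (𝔊 : Cᵒᵖ ⥤ Type) :
    Presheaf.IsLocallyInjective J (unitMap ρ hbot 𝔊) where
  equalizerSieve_mem {X} s t h := by
    obtain ⟨u⟩ := exists_hom ρ hbot hρ X.unop
    refine (hJ _ _).2 ⟨_, u, ?_⟩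
    exact ConcreteCategory.congr_hom (congr_fun (congr_arg NatTrans.app h) (pt G)) u

lemma unit_locSurj (hρ : IsCatExtension ρ) {J : GrothendieckTopology C}
    (hJ : IsAtomicTopology J) (𝔊 : Cᵒᵖ ⥤ Type) :
    Presheaf.IsLocallySurjective J (unitMap ρ hbot 𝔊) where
  imageSieve_mem {U} σ := by
    obtain ⟨u⟩ := exists_hom ρ hbot hρ U
    refine (hJ _ _).2 ⟨_, u, σ.app (pt G) u, ?_⟩
    refine NatTrans.ext (funext fun Z => ConcreteCategory.hom_ext _ _ fun b => ?_)
    obtain ⟨g, rfl⟩ := endo_eq ρ hbot hρ b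
    show (evalGSet ρ hbot 𝔊).map (gop g) (σ.app (pt G) u) =
      σ.app (pt G) (ρ.map (gmor hbot g) ≫ u)
    exact (ConcreteCategory.congr_hom (σ.naturality (gop g)) u).symm

end SheafFixAux
end AuxProofs


/-- For a category extension `ρ : P⋊G ⥤ C` with the atomic topology on `C`, the
sheafification of any presheaf `𝔊` on `C` is naturally isomorphic to the
fixed-point presheaf of the right `G`-set `𝔊(x₀)`. -/
theorem sheafification_eq_fixedPoint (G : Type) [Group G] [Finite G] (P : Type) [PartialOrder P]
    [MulAction G P] [CovariantClass G P (· • ·) (· ≤ ·)]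
    (x₀ : P) (hbot : ∀ x : P, x₀ ≤ x)
    (C : Type) [SmallCategory C] (ρ : Transporter G P ⥤ C) (hρ : IsCatExtension ρ)
    (J : GrothendieckTopology C) (hJ : IsAtomicTopology J) (𝔊 : Cᵒᵖ ⥤ Type) :
    Nonempty (J.sheafify 𝔊 ≅ fixedPointPresheaf ρ hbot (evalGSet ρ hbot 𝔊)) := by
  have hF := SheafFixAux.fpp_isSheaf ρ hbot hρ hJ (evalGSet ρ hbot 𝔊)
  let η := SheafFixAux.unitMap ρ hbot 𝔊
  haveI := SheafFixAux.unit_locInj ρ hbot hρ hJ 𝔊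
  haveI := SheafFixAux.unit_locSurj ρ hbot hρ hJ 𝔊
  let φ := J.sheafifyLift η hF
  have fac : J.toSheafify 𝔊 ≫ φ = η := J.toSheafify_sheafifyLift η hF
  haveI : Presheaf.IsLocallySurjective J φ :=
    Presheaf.isLocallySurjective_of_isLocallySurjective_fac J fac
  haveI : Presheaf.IsLocallyInjective J φ :=
    (Presheaf.comp_isLocallyInjective_iff J (J.toSheafify 𝔊) φ).1
      (by rw [fac]; infer_instance)
  let Φ : (⟨J.sheafify 𝔊, J.sheafify_isSheaf 𝔊⟩ : Sheaf J Type) ⟶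
      ⟨fixedPointPresheaf ρ hbot (evalGSet ρ hbot 𝔊), hF⟩ := ⟨φ⟩
  haveI : IsIso Φ := (Sheaf.isLocallyBijective_iff_isIso Φ).1 ⟨‹_›, ‹_›⟩
  exact ⟨(sheafToPresheaf J Type).mapIso (asIso Φ)⟩
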